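/- Let (Ω, F, P) be a complete probability space, C : Ω ⇒ ℝⁿ a measurable set-valued map with nonempty closed convex values, and let 𝒞 = { x ∈ L²(Ω,F,ℝⁿ) : x(ω) ∈ C(ω) a.s. }. Let F : L²(Ω,F,ℝⁿ) → L²(Ω,F,ℝⁿ) and x* ∈ 𝒞. Then the integral condition E⟨F(x*), x − x*⟩ ≥ 0 for all x ∈ 𝒞 holds if and only if the pointwise condition ⟨F(x*)(ω), z − x*(ω)⟩ ≥ 0 for all z ∈ C(ω), for almost every ω ∈ Ω, holds. -/

import Mathlib

open MeasureTheory RealInnerProductSpace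

set_option maxHeartbeats 2000000 in
/-- For a measurable set-valued map `C` with nonempty closed convex values and the set
`𝒞` of its `L²`-selections, the integral variational inequality
`E⟨F(x*), x − x*⟩ ≥ 0 ∀ x ∈ 𝒞` is equivalent to the pointwise one
`⟨F(x*)(ω), z − x*(ω)⟩ ≥ 0 ∀ z ∈ C(ω)` for a.e. `ω`. -/
theorem integral_VI_iff_pointwise_VI
    {Ω : Type*} {n : ℕ} {mF : MeasurableSpace Ω} {μ : Measure Ω} [IsProbabilityMeasure μ]
    [μ.IsComplete]
    (C : Ω → Set (EuclideanSpace ℝ (Fin n)))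
    (hCmeas : ∀ A : Set (EuclideanSpace ℝ (Fin n)), IsOpen A →
      MeasurableSet {ω | (C ω ∩ A).Nonempty})
    (hCne : ∀ ω, (C ω).Nonempty) (hCclosed : ∀ ω, IsClosed (C ω))
    (hCconv : ∀ ω, Convex ℝ (C ω))
    (F : (Ω → EuclideanSpace ℝ (Fin n)) → Ω → EuclideanSpace ℝ (Fin n))
    (xs : Ω → EuclideanSpace ℝ (Fin n)) (hxs : MemLp xs 2 μ)
    (hxsC : ∀ᵐ ω ∂μ, xs ω ∈ C ω) (hFxs : MemLp (F xs) 2 μ) :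
    (∀ x : Ω → EuclideanSpace ℝ (Fin n), MemLp x 2 μ → (∀ᵐ ω ∂μ, x ω ∈ C ω) →
        0 ≤ ∫ ω, ⟪F xs ω, x ω - xs ω⟫ ∂μ) ↔
      (∀ᵐ ω ∂μ, ∀ z ∈ C ω, 0 ≤ ⟪F xs ω, z - xs ω⟫) := by
  classical
  constructor
  · intro hVI
    obtain ⟨e, hede⟩ := TopologicalSpace.exists_dense_seq (EuclideanSpace ℝ (Fin n))
    set x' : Ω → EuclideanSpace ℝ (Fin n) := hxs.1.mk xs with hxdef
    have hxm : StronglyMeasurable x' := hxs.1.stronglyMeasurable_mk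
    have hxe : xs =ᵐ[μ] x' := hxs.1.ae_eq_mk
    set f' : Ω → EuclideanSpace ℝ (Fin n) := hFxs.1.mk (F xs) with hfdef
    have hfm : StronglyMeasurable f' := hFxs.1.stronglyMeasurable_mk
    have hfe : F xs =ᵐ[μ] f' := hFxs.1.ae_eq_mk
    set u : Ω → EuclideanSpace ℝ (Fin n) := fun ω => x' ω - f' ω with hudef
    have hum : Measurable u := hxm.measurable.sub hfm.measurable
    -- measurability of ω ↦ infDist y (C ω) for fixed y
    have hgd : ∀ y : EuclideanSpace ℝ (Fin n), Measurable fun ω => Metric.infDist y (C ω) := by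
      intro y
      apply measurable_of_Iio
      intro r
      have hset : (fun ω => Metric.infDist y (C ω)) ⁻¹' Set.Iio r
          = {ω | (C ω ∩ Metric.ball y r).Nonempty} := by
        ext ω
        simp only [Set.mem_preimage, Set.mem_Iio, Set.mem_setOf_eq]
        rw [Metric.infDist_lt_iff (hCne ω)]
        constructor
        · rintro ⟨z, hz, hd⟩
          exact ⟨z, hz, by rwa [Metric.mem_ball, dist_comm]⟩
        · rintro ⟨z, hz, hd⟩
          exact ⟨z, hz, by rwa [Metric.mem_ball, dist_comm] at hd⟩
      rw [hset]; exact hCmeas _ Metric.isOpen_ball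
    set d : Ω → ℝ := fun ω => Metric.infDist (u ω) (C ω) with hddef
    have hdnonneg : ∀ ω, 0 ≤ d ω := fun ω => Metric.infDist_nonneg
    have hdformula : ∀ ω, d ω = ⨅ i, (dist (u ω) (e i) + Metric.infDist (e i) (C ω)) := by
      intro ω
      apply le_antisymm
      · apply le_ciInf
        intro i
        calc Metric.infDist (u ω) (C ω) ≤ Metric.infDist (e i) (C ω) + dist (u ω) (e i) :=
              Metric.infDist_le_infDist_add_dist
          _ = dist (u ω) (e i) + Metric.infDist (e i) (C ω) := by ring
      · apply le_of_forall_pos_le_add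
        intro ε hε
        have hlt : Metric.infDist (u ω) (C ω) < d ω + ε/3 := by
          simp only [hddef]; linarith
        obtain ⟨z, hzC, hzd⟩ := (Metric.infDist_lt_iff (hCne ω)).1 hlt
        obtain ⟨i, hi⟩ := hede.exists_dist_lt z (show (0:ℝ) < ε/3 by linarith)
        have hbdd : BddBelow (Set.range fun i =>
            dist (u ω) (e i) + Metric.infDist (e i) (C ω)) := by
          refine ⟨0, ?_⟩
          rintro _ ⟨i, rfl⟩
          dsimp only
          exact add_nonneg dist_nonneg Metric.infDist_nonneg
        refine ciInf_le_of_le hbdd i ?_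
        have h1 : dist (u ω) (e i) ≤ dist (u ω) z + dist z (e i) := dist_triangle _ _ _
        have h2 : Metric.infDist (e i) (C ω) ≤ dist (e i) z := Metric.infDist_le_dist_of_mem hzC
        rw [dist_comm (e i) z] at h2
        linarith
    have hdm : Measurable d := by
      have : d = fun ω => ⨅ i, (dist (u ω) (e i) + Metric.infDist (e i) (C ω)) :=
        funext hdformula
      rw [this]
      exact Measurable.iInf fun i => (hum.dist measurable_const).add (hgd (e i))
    -- the metric projection
    have hex : ∀ ω, ∃ v, v ∈ C ω ∧ ‖u ω - v‖ = ⨅ w : C ω, ‖u ω - w‖ := by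
      intro ω
      obtain ⟨v, hv1, hv2⟩ := exists_norm_eq_iInf_of_complete_convex (hCne ω)
        (hCclosed ω).isComplete (hCconv ω) (u ω)
      exact ⟨v, hv1, hv2⟩
    choose p hpC hpmin using hex
    have hpd : ∀ ω, ‖u ω - p ω‖ = d ω := by
      intro ω
      rw [hpmin ω]
      simp only [hddef]
      rw [Metric.infDist_eq_iInf]
      exact iInf_congr fun w => (dist_eq_norm _ _).symm
    -- approximate selections from the dense sequence
    have Hsel : ∀ (k : ℕ) (ω : Ω), ∃ i, Metric.infDist (e i) (C ω) < 1/(k+1)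
        ∧ dist (u ω) (e i) < d ω + 1/(k+1) := by
      intro k ω
      have hpos : (0:ℝ) < 1/(k+1) := by positivity
      obtain ⟨i, hi⟩ := hede.exists_dist_lt (p ω) hpos
      refine ⟨i, ?_, ?_⟩
      · calc Metric.infDist (e i) (C ω) ≤ dist (e i) (p ω) :=
              Metric.infDist_le_dist_of_mem (hpC ω)
          _ = dist (p ω) (e i) := dist_comm _ _
          _ < 1/(k+1) := hi
      · have hup : dist (u ω) (p ω) = d ω := by rw [dist_eq_norm]; exact hpd ω
        calc dist (u ω) (e i) ≤ dist (u ω) (p ω) + dist (p ω) (e i) := dist_triangle _ _ _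
          _ < d ω + 1/(k+1) := by rw [hup]; linarith
    set J : ℕ → Ω → ℕ := fun k ω => Nat.find (Hsel k ω) with hJdef
    have hcondm : ∀ (k i : ℕ), MeasurableSet {ω | Metric.infDist (e i) (C ω) < 1/(k+1)
        ∧ dist (u ω) (e i) < d ω + 1/(k+1)} := by
      intro k i
      rw [Set.setOf_and]
      exact (measurableSet_lt (hgd (e i)) measurable_const).inter
        (measurableSet_lt (hum.dist measurable_const) (hdm.add_const _))
    have hJm : ∀ k, Measurable (J k) := by
      intro k
      apply measurable_to_countable'
      intro i
      have hset : J k ⁻¹' {i} = {ω | (Metric.infDist (e i) (C ω) < 1/(k+1)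
          ∧ dist (u ω) (e i) < d ω + 1/(k+1))}
          ∩ ⋂ j ∈ Set.Iio i, ({ω | Metric.infDist (e j) (C ω) < 1/(k+1)
          ∧ dist (u ω) (e j) < d ω + 1/(k+1)})ᶜ := by
        ext ω
        simp only [Set.mem_preimage, Set.mem_singleton_iff, hJdef, Set.mem_inter_iff,
          Set.mem_setOf_eq, Set.mem_iInter, Set.mem_compl_iff, Set.mem_Iio]
        rw [Nat.find_eq_iff]
      rw [hset]
      exact (hcondm k i).inter
        (MeasurableSet.biInter (Set.to_countable _) fun j _ => (hcondm k j).compl)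
    set q : ℕ → Ω → EuclideanSpace ℝ (Fin n) := fun k ω => e (J k ω) with hqdef
    have hqm : ∀ k, Measurable (q k) := fun k => measurable_from_top.comp (hJm k)
    -- quantitative strong convexity estimate for the projection
    have hkey : ∀ ω z, z ∈ C ω → ‖z - p ω‖^2 ≤ 2*(‖u ω - z‖^2 - d ω^2) := by
      intro ω z hz
      have hmid : (1/2 : ℝ) • z + (1/2 : ℝ) • p ω ∈ C ω :=
        (hCconv ω) hz (hpC ω) (by norm_num) (by norm_num) (by norm_num)
      have hdm2 : d ω ≤ ‖u ω - ((1/2 : ℝ) • z + (1/2 : ℝ) • p ω)‖ := by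
        rw [← dist_eq_norm]
        exact Metric.infDist_le_dist_of_mem hmid
      have hpar := parallelogram_law_with_norm ℝ (u ω - z) (u ω - p ω)
      have h1 : u ω - z + (u ω - p ω) = (2:ℝ) • (u ω - ((1/2 : ℝ) • z + (1/2 : ℝ) • p ω)) := by
        module
      have h2 : u ω - z - (u ω - p ω) = p ω - z := by abel
      rw [h1, h2, norm_smul] at hpar
      have hn : ‖(2:ℝ)‖ = 2 := by norm_num
      rw [hn] at hpar
      have hup : ‖u ω - p ω‖ = d ω := hpd ω
      have hnz : ‖p ω - z‖ = ‖z - p ω‖ := norm_sub_rev _ _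
      have hsq : d ω^2 ≤ ‖u ω - ((1/2 : ℝ) • z + (1/2 : ℝ) • p ω)‖^2 :=
        pow_le_pow_left₀ (hdnonneg ω) hdm2 2
      rw [hnz, hup] at hpar
      nlinarith [hpar, hsq]
    -- convergence of the approximations to the projection
    have hconv : ∀ ω, Filter.Tendsto (fun k => q k ω) Filter.atTop (nhds (p ω)) := by
      intro ω
      rw [tendsto_iff_dist_tendsto_zero]
      have hb : ∀ k : ℕ, dist (q k ω) (p ω)
          ≤ 2*(1/(k+1)) + Real.sqrt (2*((d ω + 3*(1/(k+1)))^2 - d ω^2)) := by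
        intro k
        have h1 := (Nat.find_spec (Hsel k ω)).1
        have h2 := (Nat.find_spec (Hsel k ω)).2
        obtain ⟨z, hzC, hz⟩ := (Metric.infDist_lt_iff (hCne ω)).1 h1
        have hpos : (0:ℝ) < 1/(k+1) := by positivity
        have hdz : ‖u ω - z‖ ≤ d ω + 3*(1/(k+1)) := by
          rw [← dist_eq_norm]
          calc dist (u ω) z ≤ dist (u ω) (e (Nat.find (Hsel k ω)))
                + dist (e (Nat.find (Hsel k ω))) z := dist_triangle _ _ _
            _ ≤ d ω + 3*(1/(k+1)) := by linarith
        have hzp : ‖z - p ω‖^2 ≤ 2*((d ω + 3*(1/(k+1)))^2 - d ω^2) := by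
          have hk1 := hkey ω z hzC
          have h4 : ‖u ω - z‖^2 ≤ (d ω + 3*(1/(k+1)))^2 :=
            pow_le_pow_left₀ (norm_nonneg _) hdz 2
          linarith
        have hzp' : ‖z - p ω‖ ≤ Real.sqrt (2*((d ω + 3*(1/(k+1)))^2 - d ω^2)) := by
          have hs := Real.sqrt_le_sqrt hzp
          rwa [Real.sqrt_sq (norm_nonneg _)] at hs
        calc dist (q k ω) (p ω) ≤ dist (q k ω) z + dist z (p ω) := dist_triangle _ _ _
          _ ≤ 2*(1/(k+1)) + Real.sqrt (2*((d ω + 3*(1/(k+1)))^2 - d ω^2)) := by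
              have h5 : dist (q k ω) z < 1/(k+1) := hz
              have h6 : dist z (p ω) = ‖z - p ω‖ := dist_eq_norm _ _
              rw [h6]
              linarith
      apply squeeze_zero (fun k => dist_nonneg) hb
      have hcont : Continuous (fun s : ℝ => 2*s + Real.sqrt (2*((d ω + 3*s)^2 - d ω^2))) := by
        apply Continuous.add
        · exact continuous_const.mul continuous_id
        · exact Real.continuous_sqrt.comp (continuous_const.mul
            (((continuous_const.add (continuous_const.mul continuous_id)).pow 2).sub
              continuous_const))
      have ht := (hcont.tendsto 0).comp tendsto_one_div_add_atTop_nhds_zero_nat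
      have h0 : 2*(0:ℝ) + Real.sqrt (2*((d ω + 3*(0:ℝ))^2 - d ω^2)) = 0 := by
        rw [show (2:ℝ)*((d ω + 3*(0:ℝ))^2 - d ω^2) = 0 by ring, Real.sqrt_zero]; ring
      rw [h0] at ht
      exact ht
    have hpm : Measurable p := measurable_of_tendsto_metrizable hqm (tendsto_pi_nhds.2 hconv)
    have hpsm : AEStronglyMeasurable p μ := hpm.aestronglyMeasurable
    -- p is in L²
    have hx2 : MemLp x' 2 μ := hxs.ae_eq hxe
    have hf2 : MemLp f' 2 μ := hFxs.ae_eq hfe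
    have hbnd : MemLp (fun ω => ‖x' ω‖ + 2*‖f' ω‖) 2 μ := hx2.norm.add (hf2.norm.const_mul 2)
    have hp2 : MemLp p 2 μ := by
      apply hbnd.of_le hpsm
      filter_upwards [hxsC, hxe, hfe] with ω hmem hx hf
      have hxc : x' ω ∈ C ω := hx ▸ hmem
      have h1 : ‖u ω - p ω‖ ≤ ‖f' ω‖ := by
        rw [hpd ω]
        calc d ω ≤ dist (u ω) (x' ω) := Metric.infDist_le_dist_of_mem hxc
          _ = ‖f' ω‖ := by
              rw [dist_eq_norm]
              simp only [hudef]
              rw [show x' ω - f' ω - x' ω = -(f' ω) by abel, norm_neg]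
      have h3 : ‖p ω‖ ≤ ‖u ω‖ + ‖u ω - p ω‖ := by
        calc ‖p ω‖ = ‖u ω - (u ω - p ω)‖ := by rw [sub_sub_cancel]
          _ ≤ ‖u ω‖ + ‖u ω - p ω‖ := norm_sub_le _ _
      have h4 : ‖u ω‖ ≤ ‖x' ω‖ + ‖f' ω‖ := norm_sub_le _ _
      have h2 : ‖p ω‖ ≤ ‖x' ω‖ + 2*‖f' ω‖ := by linarith
      calc ‖p ω‖ ≤ ‖x' ω‖ + 2*‖f' ω‖ := h2
        _ ≤ ‖‖x' ω‖ + 2*‖f' ω‖‖ := by rw [Real.norm_eq_abs]; exact le_abs_self _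
    -- the variational characterization of the projection
    have hproj : ∀ ω, ∀ w ∈ C ω, ⟪u ω - p ω, w - p ω⟫ ≤ 0 := fun ω =>
      (norm_eq_iInf_iff_real_inner_le_zero (hCconv ω) (hpC ω)).1 (hpmin ω)
    -- integrability facts
    have hsubp : MemLp (fun ω => p ω - xs ω) 2 μ := hp2.sub hxs
    have hInt : Integrable (fun ω => ⟪F xs ω, p ω - xs ω⟫) μ := by
      have hint := MeasureTheory.L2.integrable_inner (𝕜 := ℝ) (hFxs.toLp (F xs))
        (hsubp.toLp _)
      refine hint.congr ?_
      filter_upwards [MemLp.coeFn_toLp hFxs, MemLp.coeFn_toLp hsubp] with ω h1 h2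
      rw [h1, h2]
    have hdiff2 : MemLp (fun ω => x' ω - p ω) 2 μ := hx2.sub hp2
    have hsqInt : Integrable (fun ω => ‖x' ω - p ω‖^2) μ := by
      have h := hdiff2.integrable_norm_rpow (by norm_num) (by norm_num)
      refine h.congr (Filter.Eventually.of_forall fun ω => ?_)
      norm_num
    -- the pointwise inequality giving a contradiction bound
    have h1ae : ∀ᵐ ω ∂μ, ⟪F xs ω, p ω - xs ω⟫ ≤ -‖x' ω - p ω‖^2 := by
      filter_upwards [hxsC, hxe, hfe] with ω hmem hx hf
      have hxc : x' ω ∈ C ω := hx ▸ hmem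
      have hw := hproj ω (x' ω) hxc
      have he1 : u ω - p ω = (x' ω - p ω) - f' ω := by simp only [hudef]; abel
      rw [he1, inner_sub_left, real_inner_self_eq_norm_sq] at hw
      rw [hf, hx]
      rw [show p ω - x' ω = -(x' ω - p ω) by abel, inner_neg_right]
      linarith
    have key := hVI p hp2 (Filter.Eventually.of_forall hpC)
    have hmono : ∫ ω, ⟪F xs ω, p ω - xs ω⟫ ∂μ ≤ ∫ ω, -‖x' ω - p ω‖^2 ∂μ :=
      integral_mono_ae hInt hsqInt.neg h1ae
    rw [integral_neg] at hmono
    have hnn : 0 ≤ᵐ[μ] fun ω => ‖x' ω - p ω‖^2 :=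
      Filter.Eventually.of_forall fun ω => sq_nonneg _
    have hzero : ∫ ω, ‖x' ω - p ω‖^2 ∂μ = 0 :=
      le_antisymm (by linarith) (integral_nonneg fun ω => sq_nonneg _)
    have hae0 := (integral_eq_zero_iff_of_nonneg_ae hnn hsqInt).1 hzero
    filter_upwards [hae0, hxe, hfe] with ω h0 hx hf
    intro z hz
    have hxp : x' ω = p ω := by
      have h0' : ‖x' ω - p ω‖^2 = 0 := by simpa using h0
      have h0'' := pow_eq_zero_iff (n := 2) (by norm_num) |>.1 h0'
      rwa [norm_eq_zero, sub_eq_zero] at h0''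
    have hw := hproj ω z hz
    have he1 : u ω - p ω = -(f' ω) := by
      simp only [hudef]
      rw [← hxp]
      abel
    rw [he1, inner_neg_left] at hw
    rw [hf, hx, hxp]
    linarith
  · intro hpt x hx2 hxC
    apply integral_nonneg_of_ae
    filter_upwards [hpt, hxC] with ω h1 h2
    exact h1 (x ω) h2
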